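/- Let m ≥ 1 and t ≥ 1 be natural numbers, D ≥ 0 a real, and θ : ℕ → Fin m → ℝ with 0 ≤ θ(τ, j) ≤ D for all τ ∈ {1,…,t} and j. Define ψ : (Fin m → ℝ) → (Fin m → ℝ) by ψ(x)(j) = (t/(t+1))·x(j) − (1/(t+1))·∑_{τ=1}^{t−1} θ(τ, j) + (t/(t+1))·θ(t, j). Then for every x : Fin m → ℝ with x(j) ≥ 0 for all j: ∑_j |ψ(x)(j)| − ∑_j |x(j)| ≤ 2·m·D, and consequently for every ε ≥ 0, Real.exp(−ε·(∑_j |ψ(x)(j)| − ∑_j |x(j)|)) ≥ 1 − 2·ε·m·D. -/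

import Mathlib

/-- The change-of-variables map in the stability analysis of FTPL with a single exponential
perturbation: it transforms a perturbation `x` appended to the first `t` price vectors into
an equivalent perturbation appended to the first `t − 1` price vectors. -/
noncomputable def psiMap (m t : ℕ) (θ : ℕ → Fin m → ℝ) (x : Fin m → ℝ) : Fin m → ℝ :=
  fun j => ((t : ℝ) / (t + 1)) * x j - (1 / ((t : ℝ) + 1)) * ∑ τ ∈ Finset.Icc 1 (t - 1), θ τ j
    + ((t : ℝ) / (t + 1)) * θ t j

/-- **ℓ₁-norm bound on the change of variables, and the induced density-ratio bound.** If all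
prices lie in `[0, D]` then `‖ψ(x)‖₁ − ‖x‖₁ ≤ 2mD` for every nonnegative `x`, and consequently
the ratio of the product exponential(ε) densities at `ψ(x)` and at `x` is at least
`1 − 2εmD`. -/
theorem psiMap_l1_bound (m t : ℕ) (hm : 1 ≤ m) (ht : 1 ≤ t) (D : ℝ) (hD : 0 ≤ D)
    (θ : ℕ → Fin m → ℝ) (hθ : ∀ τ, 1 ≤ τ → τ ≤ t → ∀ j, 0 ≤ θ τ j ∧ θ τ j ≤ D) :
    ∀ x : Fin m → ℝ, (∀ j, 0 ≤ x j) →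
      (∑ j : Fin m, |psiMap m t θ x j|) - ∑ j : Fin m, |x j| ≤ 2 * m * D ∧
      ∀ ε : ℝ, 0 ≤ ε →
        Real.exp (-ε * ((∑ j : Fin m, |psiMap m t θ x j|) - ∑ j : Fin m, |x j|))
          ≥ 1 - 2 * ε * m * D := by
  intro x hx
  have hT : (1 : ℝ) ≤ (t : ℝ) := by exact_mod_cast ht
  have hT1 : (0 : ℝ) < (t : ℝ) + 1 := by linarith
  have key : ∀ j, |psiMap m t θ x j| - |x j| ≤ 2 * D := by
    intro j
    have hxj : |x j| = x j := abs_of_nonneg (hx j)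
    have hsum_nonneg : 0 ≤ ∑ τ ∈ Finset.Icc 1 (t - 1), θ τ j := by
      apply Finset.sum_nonneg
      intro τ hτ
      simp only [Finset.mem_Icc] at hτ
      exact (hθ τ hτ.1 (le_trans hτ.2 (Nat.sub_le t 1)) j).1
    have hsum_le : ∑ τ ∈ Finset.Icc 1 (t - 1), θ τ j ≤ ((t : ℝ) - 1) * D := by
      have : ∑ τ ∈ Finset.Icc 1 (t - 1), θ τ j ≤ ∑ τ ∈ Finset.Icc 1 (t - 1), D := by
        apply Finset.sum_le_sum
        intro τ hτ
        simp only [Finset.mem_Icc] at hτ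
        exact (hθ τ hτ.1 (le_trans hτ.2 (Nat.sub_le t 1)) j).2
      have hcard : (Finset.Icc 1 (t - 1)).card = t - 1 := by
        rw [Nat.card_Icc]; omega
      have hcast : ((t - 1 : ℕ) : ℝ) = (t : ℝ) - 1 := by
        have := Nat.cast_sub ht (R := ℝ); simpa using this
      calc ∑ τ ∈ Finset.Icc 1 (t - 1), θ τ j ≤ ∑ τ ∈ Finset.Icc 1 (t - 1), D := this
        _ = ((t - 1 : ℕ) : ℝ) * D := by rw [Finset.sum_const, hcard, nsmul_eq_mul]
        _ = ((t : ℝ) - 1) * D := by rw [hcast]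
    have hθt := hθ t ht le_rfl j
    have habs : |psiMap m t θ x j| ≤ ((t : ℝ) / (t + 1)) * x j
        + (1 / ((t : ℝ) + 1)) * ∑ τ ∈ Finset.Icc 1 (t - 1), θ τ j
        + ((t : ℝ) / (t + 1)) * θ t j := by
      unfold psiMap
      have h1 := abs_add_le (((t : ℝ) / (t + 1)) * x j - (1 / ((t : ℝ) + 1)) * ∑ τ ∈ Finset.Icc 1 (t - 1), θ τ j) (((t : ℝ) / (t + 1)) * θ t j)
      have h2 := abs_sub (((t : ℝ) / (t + 1)) * x j) ((1 / ((t : ℝ) + 1)) * ∑ τ ∈ Finset.Icc 1 (t - 1), θ τ j)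
      have ha : |((t : ℝ) / (t + 1)) * x j| = ((t : ℝ) / (t + 1)) * x j :=
        abs_of_nonneg (mul_nonneg (div_nonneg (by linarith) hT1.le) (hx j))
      have hb : |(1 / ((t : ℝ) + 1)) * ∑ τ ∈ Finset.Icc 1 (t - 1), θ τ j|
          = (1 / ((t : ℝ) + 1)) * ∑ τ ∈ Finset.Icc 1 (t - 1), θ τ j :=
        abs_of_nonneg (mul_nonneg (by positivity) hsum_nonneg)
      have hc : |((t : ℝ) / (t + 1)) * θ t j| = ((t : ℝ) / (t + 1)) * θ t j :=
        abs_of_nonneg (mul_nonneg (div_nonneg (by linarith) hT1.le) hθt.1)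
      simp only [ha, hb, hc] at h1 h2
      linarith
    have hfrac : (t : ℝ) / (t + 1) ≤ 1 := by
      rw [div_le_one hT1]; linarith
    have h3 : ((t : ℝ) / (t + 1)) * x j ≤ x j := by
      nlinarith [hx j]
    have h4 : (1 / ((t : ℝ) + 1)) * ∑ τ ∈ Finset.Icc 1 (t - 1), θ τ j
        + ((t : ℝ) / (t + 1)) * θ t j ≤ 2 * D := by
      have h5 : (1 / ((t : ℝ) + 1)) * ∑ τ ∈ Finset.Icc 1 (t - 1), θ τ j
          ≤ (1 / ((t : ℝ) + 1)) * (((t : ℝ) - 1) * D) :=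
        mul_le_mul_of_nonneg_left hsum_le (by positivity)
      have h6 : ((t : ℝ) / (t + 1)) * θ t j ≤ ((t : ℝ) / (t + 1)) * D :=
        mul_le_mul_of_nonneg_left hθt.2 (div_nonneg (by linarith) hT1.le)
      have h7 : (1 / ((t : ℝ) + 1)) * (((t : ℝ) - 1) * D) + ((t : ℝ) / (t + 1)) * D ≤ 2 * D := by
        rw [div_mul_eq_mul_div, div_mul_eq_mul_div, one_mul, ← add_div,
          div_le_iff₀ hT1]
        nlinarith
      linarith
    linarith [habs, hxj.ge, hxj.le]
  have hmain : (∑ j : Fin m, |psiMap m t θ x j|) - ∑ j : Fin m, |x j| ≤ 2 * m * D := by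
    have : (∑ j : Fin m, |psiMap m t θ x j|) - ∑ j : Fin m, |x j|
        = ∑ j : Fin m, (|psiMap m t θ x j| - |x j|) := by
      rw [Finset.sum_sub_distrib]
    rw [this]
    calc ∑ j : Fin m, (|psiMap m t θ x j| - |x j|) ≤ ∑ _j : Fin m, 2 * D :=
          Finset.sum_le_sum (fun j _ => key j)
      _ = (m : ℝ) * (2 * D) := by simp [Finset.sum_const, nsmul_eq_mul]
      _ = 2 * m * D := by ring
  refine ⟨hmain, fun ε hε => ?_⟩
  set s := (∑ j : Fin m, |psiMap m t θ x j|) - ∑ j : Fin m, |x j| with hs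
  have h1 : 1 - ε * s ≤ Real.exp (-ε * s) := by
    have := Real.add_one_le_exp (-ε * s)
    linarith
  have h2 : ε * s ≤ 2 * ε * m * D := by
    calc ε * s ≤ ε * (2 * m * D) := mul_le_mul_of_nonneg_left hmain hε
      _ = 2 * ε * m * D := by ring
  linarith
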